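/- Let (Mₙ) be a sequence of square matrices over a field k with M_{n+1} = [[Mₙ, -I],[I, Mₙ+2I]] in block form. Then for any λ ∈ k, det(M_{n+1} + λI) = det(Mₙ + (λ+1)I)². -/
import Mathlib

open Matrix

lemma det_fromBlocks_neg_one_one {k : Type} [Field k] {ι : Type} [Fintype ι] [DecidableEq ι]
    (A D : Matrix ι ι k) :
    (Matrix.fromBlocks A (-1) 1 D).det = (1 + A * D).det := by
  have hJ : (Matrix.fromBlocks (1 : Matrix ι ι k) (-1) 0 1) *
      (Matrix.fromBlocks 1 0 1 1) * (Matrix.fromBlocks 1 (-1) 0 1) *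
      (Matrix.fromBlocks 1 D (-A) 1) = Matrix.fromBlocks A (-1) 1 D := by
    simp [Matrix.fromBlocks_multiply, Matrix.mul_one, Matrix.one_mul]
  rw [← hJ]
  simp only [Matrix.det_mul, Matrix.det_fromBlocks_zero₂₁, Matrix.det_fromBlocks_zero₁₂,
    Matrix.det_fromBlocks_one₁₁, Matrix.det_one, one_mul, mul_one]
  congr 1
  noncomm_ring

/-- If `M_{n+1} = [[Mₙ, -I],[I, Mₙ + 2I]]` in block form, then for
any `λ ∈ k`, `det(M_{n+1} + λI) = det(Mₙ + (λ+1)I)²`. -/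
theorem det_block_recursion_step
    {k : Type} [Field k] {ι : Type} [Fintype ι] [DecidableEq ι]
    (M : Matrix ι ι k) (lam : k) :
    (Matrix.fromBlocks M (-1) 1 (M + (2 : k) • 1) + lam • 1).det
      = ((M + (lam + 1) • 1).det) ^ 2 := by
  set X : Matrix ι ι k := M + (lam + 1) • 1 with hX
  have h1 : Matrix.fromBlocks M (-1) 1 (M + (2 : k) • 1) + lam • (1 : Matrix (ι ⊕ ι) (ι ⊕ ι) k)
      = Matrix.fromBlocks (X - 1) (-1) 1 (X + 1) := by
    rw [← Matrix.fromBlocks_one, Matrix.fromBlocks_smul, Matrix.fromBlocks_add]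
    have e1 : X - 1 = M + lam • 1 := by rw [hX]; module
    have e2 : X + 1 = M + (2:k) • 1 + lam • 1 := by rw [hX]; module
    rw [e1, e2]
    simp
  rw [h1, det_fromBlocks_neg_one_one]
  have h2 : 1 + (X - 1) * (X + 1) = X * X := by noncomm_ring
  rw [h2, Matrix.det_mul, sq]
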